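/- arXiv:2604.20838 — 3 statements merged into one kernel-verified Lean document; each statement's English description precedes it below -/
import Mathlib

section
/- Let V be a finite-dimensional vector space over 𝔽₂ and let A, B be subspaces with A ⊓ B = ⊥. Let a ∈ A and b ∈ B be nonzero. Then the four affine cosets A, B, b + A, a + B are pairwise distinct as subsets of V, the four points 0, b, a + b, a are pairwise distinct, and the following incidences hold: 0 ∈ A ∩ B, b ∈ B ∩ (b + A), a + b ∈ (b + A) ∩ (a + B), and a ∈ (a + B) ∩ A. Hence the sequence A, 0, B, b, b + A, a + b, a + B, a, A is an 8-cycle in the Tanner graph whose check nodes are affine cosets and whose variable nodes are points of V, with a check adjacent to a point exactly when the point lies in the coset. -/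
/-- The affine coset `u + S` of a subspace `S` of an `𝔽₂`-vector space. -/
def coset {V : Type*} [AddCommGroup V] [Module (ZMod 2) V]
    (u : V) (S : Submodule (ZMod 2) V) : Set V :=
  (u + ·) '' (S : Set V)

/-- The Tanner graph whose variable nodes are the points of `V` and whose check nodes
are the affine cosets of `A` and of `B`, with a check adjacent to a point exactly when
the point lies in the coset. -/
def Tanner (V : Type*) [AddCommGroup V] [Module (ZMod 2) V]
    (A B : Submodule (ZMod 2) V) : SimpleGraph (V ⊕ Set V) :=
  SimpleGraph.fromRel (fun p q =>
    match p, q with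
    | Sum.inl x, Sum.inr s =>
        ((∃ u : V, s = coset u A) ∨ (∃ u : V, s = coset u B)) ∧ x ∈ s
    | _, _ => False)

lemma mem_coset {V : Type*} [AddCommGroup V] [Module (ZMod 2) V]
    {u x : V} {S : Submodule (ZMod 2) V} : x ∈ coset u S ↔ x - u ∈ S := by
  constructor
  · rintro ⟨s, hs, rfl⟩; simpa using hs
  · intro h; exact ⟨x - u, h, show u + (x - u) = x by abel⟩

theorem stmt8 (V : Type*) [AddCommGroup V] [Module (ZMod 2) V]
    [FiniteDimensional (ZMod 2) V]
    (A B : Submodule (ZMod 2) V) (hAB : A ⊓ B = ⊥)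
    (a b : V) (ha : a ∈ A) (hb : b ∈ B) (ha0 : a ≠ 0) (hb0 : b ≠ 0) :
    -- the four affine cosets A, B, b + A, a + B are pairwise distinct subsets of V
    (coset 0 A ≠ coset 0 B ∧ coset 0 A ≠ coset b A ∧ coset 0 A ≠ coset a B ∧
     coset 0 B ≠ coset b A ∧ coset 0 B ≠ coset a B ∧ coset b A ≠ coset a B) ∧
    -- the four points 0, b, a + b, a are pairwise distinct
    ((0 : V) ≠ b ∧ (0 : V) ≠ a + b ∧ (0 : V) ≠ a ∧
     b ≠ a + b ∧ b ≠ a ∧ a + b ≠ a) ∧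
    -- the incidences giving the 8-cycle:
    -- A - 0 - B - b - (b + A) - (a + b) - (a + B) - a - A
    ((0 : V) ∈ coset 0 A ∩ coset 0 B ∧
     b ∈ coset 0 B ∩ coset b A ∧
     a + b ∈ coset b A ∩ coset a B ∧
     a ∈ coset a B ∩ coset 0 A) ∧
    -- hence the sequence A, 0, B, b, b + A, a + b, a + B, a, A is an 8-cycle in the
    -- Tanner graph
    (∃ w : (Tanner V A B).Walk (Sum.inr (coset 0 A)) (Sum.inr (coset 0 A)),
      w.IsCycle ∧ w.length = 8 ∧
      w.support =
        [Sum.inr (coset 0 A), Sum.inl 0, Sum.inr (coset 0 B), Sum.inl b,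
         Sum.inr (coset b A), Sum.inl (a + b), Sum.inr (coset a B), Sum.inl a,
         Sum.inr (coset 0 A)]) := by
  -- basic non-membership facts
  have hbA : b ∉ A := by
    intro h
    exact hb0 ((Submodule.mem_bot _).mp (hAB ▸ Submodule.mem_inf.mpr ⟨h, hb⟩))
  have haB : a ∉ B := by
    intro h
    exact ha0 ((Submodule.mem_bot _).mp (hAB ▸ Submodule.mem_inf.mpr ⟨ha, h⟩))
  -- memberships
  have m0A : (0 : V) ∈ coset 0 A := mem_coset.mpr (by simpa using A.zero_mem)
  have m0B : (0 : V) ∈ coset 0 B := mem_coset.mpr (by simpa using B.zero_mem)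
  have mbB : b ∈ coset 0 B := mem_coset.mpr (by simpa using hb)
  have mbbA : b ∈ coset b A := mem_coset.mpr (by simpa using A.zero_mem)
  have mabbA : a + b ∈ coset b A := mem_coset.mpr (by simpa using ha)
  have mabaB : a + b ∈ coset a B := mem_coset.mpr (by simpa using hb)
  have maaB : a ∈ coset a B := mem_coset.mpr (by simpa using B.zero_mem)
  have maA : a ∈ coset 0 A := mem_coset.mpr (by simpa using ha)
  -- point distinctness
  have p1 : (0 : V) ≠ b := fun h => hb0 h.symm
  have p2 : (0 : V) ≠ a + b := by
    intro h
    apply haB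
    have : a = -b := by rw [eq_neg_iff_add_eq_zero]; exact h.symm
    rw [this]; exact neg_mem hb
  have p3 : (0 : V) ≠ a := fun h => ha0 h.symm
  have p4 : b ≠ a + b := fun h => ha0 (right_eq_add.mp h)
  have p5 : b ≠ a := fun h => haB (h ▸ hb)
  have p6 : a + b ≠ a := fun h => hb0 (add_eq_left.mp h)
  -- coset distinctness
  have c1 : coset 0 A ≠ coset 0 B := by
    intro h
    have := mem_coset.mp (h ▸ maA)
    rw [sub_zero] at this
    exact haB this
  have c2 : coset 0 A ≠ coset b A := by
    intro h
    have := mem_coset.mp (h.symm ▸ mbbA)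
    rw [sub_zero] at this
    exact hbA this
  have c3 : coset 0 A ≠ coset a B := by
    intro h
    have := mem_coset.mp (h ▸ m0A)
    rw [zero_sub] at this
    have := neg_mem this
    rw [neg_neg] at this
    exact haB this
  have c4 : coset 0 B ≠ coset b A := by
    intro h
    have := mem_coset.mp (h ▸ m0B)
    rw [zero_sub] at this
    have := neg_mem this
    rw [neg_neg] at this
    exact hbA this
  have c5 : coset 0 B ≠ coset a B := by
    intro h
    have := mem_coset.mp (h.symm ▸ maaB)
    rw [sub_zero] at this
    exact haB this
  have c6 : coset b A ≠ coset a B := by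
    intro h
    have h1 := mem_coset.mp (h ▸ mbbA)
    have h2 := sub_mem hb h1
    rw [sub_sub_cancel] at h2
    exact haB h2
  -- adjacency helpers
  have adjCP : ∀ (s : Set V) (x : V),
      ((∃ u : V, s = coset u A) ∨ (∃ u : V, s = coset u B)) → x ∈ s →
      (Tanner V A B).Adj (Sum.inr s) (Sum.inl x) := by
    intro s x h1 h2
    exact (SimpleGraph.fromRel_adj _ _ _).mpr ⟨by simp, Or.inr ⟨h1, h2⟩⟩
  have adjPC : ∀ (s : Set V) (x : V),
      ((∃ u : V, s = coset u A) ∨ (∃ u : V, s = coset u B)) → x ∈ s →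
      (Tanner V A B).Adj (Sum.inl x) (Sum.inr s) := by
    intro s x h1 h2
    exact (SimpleGraph.fromRel_adj _ _ _).mpr ⟨by simp, Or.inl ⟨h1, h2⟩⟩
  have e1 := adjCP (coset 0 A) 0 (Or.inl ⟨0, rfl⟩) m0A
  have e2 := adjPC (coset 0 B) 0 (Or.inr ⟨0, rfl⟩) m0B
  have e3 := adjCP (coset 0 B) b (Or.inr ⟨0, rfl⟩) mbB
  have e4 := adjPC (coset b A) b (Or.inl ⟨b, rfl⟩) mbbA
  have e5 := adjCP (coset b A) (a+b) (Or.inl ⟨b, rfl⟩) mabbA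
  have e6 := adjPC (coset a B) (a+b) (Or.inr ⟨a, rfl⟩) mabaB
  have e7 := adjCP (coset a B) a (Or.inr ⟨a, rfl⟩) maaB
  have e8 := adjPC (coset 0 A) a (Or.inl ⟨0, rfl⟩) maA
  refine ⟨⟨c1, c2, c3, c4, c5, c6⟩, ⟨p1, p2, p3, p4, p5, p6⟩,
    ⟨⟨m0A, m0B⟩, ⟨mbB, mbbA⟩, ⟨mabbA, mabaB⟩, ⟨maaB, maA⟩⟩, ?_⟩
  refine ⟨.cons e1 (.cons e2 (.cons e3 (.cons e4 (.cons e5 (.cons e6 (.cons e7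
    (.cons e8 .nil))))))), ?_, rfl, rfl⟩
  rw [SimpleGraph.Walk.cons_isCycle_iff]
  constructor
  · apply SimpleGraph.Walk.IsPath.mk'
    simp [SimpleGraph.Walk.support_cons]
    exact ⟨⟨p1, p2, p3⟩, ⟨c4, c5, fun h => c1 h.symm⟩, ⟨fun h => p3 h.symm, p5⟩,
      ⟨c6, fun h => c2 h.symm⟩, hb0, fun h => c3 h.symm⟩
  · simp [SimpleGraph.Walk.edges_cons, Sym2.eq_iff]
    exact ⟨c1, fun _ => p1, fun _ => p1, fun _ => p2, fun _ => p2, fun _ => p3, p3⟩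
end

section
/- Let H_X and H_Z be the 192 × 512 base matrices over 𝔽₂ whose rows are the incidence vectors of all affine cosets of A = span{e₁,e₂,e₃}, B = span{e₄,e₅,e₆}, C = span{e₇,e₈,e₉} (for H_X) and of D₁ = span{e₁,e₄,e₇}, D₂ = span{e₂,e₅,e₈}, D₃ = span{e₃,e₆,e₉} (for H_Z) in V = 𝔽₂⁹. Then rank(H_X) = rank(H_Z) = 169 over 𝔽₂, and consequently the number of logical qubits of the CSS code defined by this pair is k = 512 − rank(H_X) − rank(H_Z) = 174. -/
open scoped Classical

/-- `V = 𝔽₂⁹`. -/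
abbrev V : Type := Fin 9 → ZMod 2

/-- The standard basis vectors `e₁, …, e₉` (zero-indexed as `e 0, …, e 8`). -/
def e (i : Fin 9) : V := Pi.single i 1

/-- The family `A, B, C`: `Xfam 0 = A = span{e₁,e₂,e₃}`, `Xfam 1 = B`, `Xfam 2 = C`. -/
def Xfam (i : Fin 3) : Submodule (ZMod 2) V :=
  Submodule.span (ZMod 2)
    {e ⟨3 * i.val, by have := i.isLt; omega⟩,
     e ⟨3 * i.val + 1, by have := i.isLt; omega⟩,
     e ⟨3 * i.val + 2, by have := i.isLt; omega⟩}

/-- The family `D₁, D₂, D₃`: `Zfam j = span{e_j, e_{j+3}, e_{j+6}}` (zero-indexed). -/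
def Zfam (j : Fin 3) : Submodule (ZMod 2) V :=
  Submodule.span (ZMod 2)
    {e ⟨j.val, by have := j.isLt; omega⟩,
     e ⟨j.val + 3, by have := j.isLt; omega⟩,
     e ⟨j.val + 6, by have := j.isLt; omega⟩}

/-- Row index of `H_X`: a family index `i` together with an affine coset of `Xfam i`,
encoded as an element of the quotient `V ⧸ Xfam i`. -/
abbrev RX : Type := (i : Fin 3) × (V ⧸ Xfam i)

/-- Row index of `H_Z`. -/
abbrev RZ : Type := (j : Fin 3) × (V ⧸ Zfam j)

/-- The base matrix `H_X`: the row indexed by a coset is its incidence vector. -/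
noncomputable def HX : Matrix RX V (ZMod 2) := fun r x =>
  if (Submodule.Quotient.mk x : V ⧸ Xfam r.1) = r.2 then 1 else 0

/-- The base matrix `H_Z`. -/
noncomputable def HZ : Matrix RZ V (ZMod 2) := fun s x =>
  if (Submodule.Quotient.mk x : V ⧸ Zfam s.1) = s.2 then 1 else 0
/-- Functions `V → ZMod 2` depending only on the coordinates in `s`. -/
def Dep (s : Finset (Fin 9)) : Submodule (ZMod 2) (V → ZMod 2) where
  carrier := {f | ∀ x y : V, (∀ k ∈ s, x k = y k) → f x = f y}
  zero_mem' := by intro x y _; rfl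
  add_mem' := by
    intro f g hf hg x y h
    simp only [Pi.add_apply, hf x y h, hg x y h]
  smul_mem' := by
    intro c f hf x y h
    simp only [Pi.smul_apply, hf x y h]

lemma mem_Dep {s : Finset (Fin 9)} {f : V → ZMod 2} :
    f ∈ Dep s ↔ ∀ x y : V, (∀ k ∈ s, x k = y k) → f x = f y := Iff.rfl

lemma Dep_mono {s t : Finset (Fin 9)} (h : s ⊆ t) : Dep s ≤ Dep t := by
  intro f hf x y hxy
  exact hf x y fun k hk => hxy k (h hk)

lemma Dep_inf (s t : Finset (Fin 9)) : Dep s ⊓ Dep t = Dep (s ∩ t) := by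
  apply le_antisymm
  · rintro f ⟨hfs, hft⟩ x y hxy
    set z : V := fun k => if k ∈ s then x k else y k with hz
    have h1 : f x = f z := by
      apply hfs
      intro k hk
      simp [hz, hk]
    have h2 : f z = f y := by
      apply hft
      intro k hk
      by_cases hks : k ∈ s
      · simpa [hz, hks] using hxy k (Finset.mem_inter.2 ⟨hks, hk⟩)
      · simp [hz, hks]
    exact h1.trans h2
  · exact le_inf (Dep_mono (Finset.inter_subset_left)) (Dep_mono (Finset.inter_subset_right))

/-- Restriction to `s` (zeroing elsewhere). -/
noncomputable def rho (s : Finset (Fin 9)) (x : V) : V := fun k => if k ∈ s then x k else 0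

lemma Dep_sup_inf (p q r : Finset (Fin 9)) :
    (Dep p ⊔ Dep q) ⊓ Dep r = Dep (p ∩ r) ⊔ Dep (q ∩ r) := by
  apply le_antisymm
  · rintro f ⟨hfpq, hfr⟩
    rcases Submodule.mem_sup.1 hfpq with ⟨g, hg, h, hh, rfl⟩
    apply Submodule.mem_sup.2
    refine ⟨fun x => g (rho r x), ?_, fun x => h (rho r x), ?_, ?_⟩
    · intro x y hxy
      apply hg
      intro k hk
      by_cases hkr : k ∈ r
      · simpa [rho, hkr] using hxy k (Finset.mem_inter.2 ⟨hk, hkr⟩)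
      · simp [rho, hkr]
    · intro x y hxy
      apply hh
      intro k hk
      by_cases hkr : k ∈ r
      · simpa [rho, hkr] using hxy k (Finset.mem_inter.2 ⟨hk, hkr⟩)
      · simp [rho, hkr]
    · funext x
      have : (g + h) x = (g + h) (rho r x) := by
        apply hfr
        intro k hk
        simp [rho, hk]
      simpa using this.symm
  · apply le_inf
    · exact sup_le ((Dep_mono Finset.inter_subset_left).trans le_sup_left)
        ((Dep_mono Finset.inter_subset_left).trans le_sup_right)
    · exact sup_le (Dep_mono Finset.inter_subset_right) (Dep_mono Finset.inter_subset_right)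

/-- `Dep s` is linearly equivalent to functions on the coordinates in `s`. -/
noncomputable def depEquiv (s : Finset (Fin 9)) :
    (Dep s) ≃ₗ[ZMod 2] (({ k // k ∈ s } → ZMod 2) → ZMod 2) where
  toFun f := fun z => f.1 (fun k => if h : k ∈ s then z ⟨k, h⟩ else 0)
  invFun g := ⟨fun x => g (fun (k : { k // k ∈ s }) => x k.1), by
    intro x y hxy
    show g _ = g _
    congr 1
    funext k
    exact hxy _ k.2⟩
  map_add' f g := rfl
  map_smul' c f := rfl
  left_inv f := by
    apply Subtype.ext
    funext x
    apply f.2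
    intro k hk
    simp [hk]
  right_inv g := by
    funext z
    show g _ = g _
    congr 1
    funext k
    simp [k.2]

lemma finrank_Dep (s : Finset (Fin 9)) :
    Module.finrank (ZMod 2) (Dep s) = 2 ^ s.card := by
  rw [LinearEquiv.finrank_eq (depEquiv s), Module.finrank_pi (ZMod 2)]
  simp [Fintype.card_fun]

lemma finrank_triple_sup (p q r : Finset (Fin 9))
    (hp : p.card = 6) (hq : q.card = 6) (hr : r.card = 6)
    (hpq : (p ∩ q).card = 3) (hpr : (p ∩ r).card = 3) (hqr : (q ∩ r).card = 3)
    (hpqr : ((p ∩ r) ∩ (q ∩ r)).card = 0) :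
    Module.finrank (ZMod 2) ↥(Dep p ⊔ Dep q ⊔ Dep r) = 169 := by
  have h1 := Submodule.finrank_sup_add_finrank_inf_eq (Dep p) (Dep q)
  rw [Dep_inf, finrank_Dep, finrank_Dep, finrank_Dep, hpq, hp, hq] at h1
  have h3 := Submodule.finrank_sup_add_finrank_inf_eq (Dep (p ∩ r)) (Dep (q ∩ r))
  rw [Dep_inf, finrank_Dep, finrank_Dep, finrank_Dep, hpqr, hpr, hqr] at h3
  have h2 := Submodule.finrank_sup_add_finrank_inf_eq (Dep p ⊔ Dep q) (Dep r)
  rw [Dep_sup_inf, finrank_Dep, hr] at h2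
  omega

lemma span_coset_indicators (U : Submodule (ZMod 2) V) (s : Finset (Fin 9))
    (hU : ∀ x y : V, (Submodule.Quotient.mk x : V ⧸ U) = Submodule.Quotient.mk y ↔
      ∀ k ∈ s, x k = y k) :
    Submodule.span (ZMod 2) (Set.range (fun q : V ⧸ U =>
      (fun x => if (Submodule.Quotient.mk x : V ⧸ U) = q then (1 : ZMod 2) else 0))) = Dep s := by
  apply le_antisymm
  · rw [Submodule.span_le]
    rintro _ ⟨q, rfl⟩
    intro x y hxy
    simp only
    rw [(hU x y).2 hxy]
  · intro f hf
    haveI : Fintype (V ⧸ U) := Fintype.ofFinite _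
    have hfs : f = ∑ q : V ⧸ U, f (Quotient.out q) •
        (fun x => if (Submodule.Quotient.mk x : V ⧸ U) = q then (1 : ZMod 2) else 0) := by
      funext x
      rw [Finset.sum_apply]
      have : ∀ q : V ⧸ U, (f (Quotient.out q) •
          (fun x => if (Submodule.Quotient.mk x : V ⧸ U) = q then (1 : ZMod 2) else 0)) x
          = if (Submodule.Quotient.mk x : V ⧸ U) = q then f (Quotient.out q) else 0 := by
        intro q
        simp [mul_ite]
      rw [Finset.sum_congr rfl (fun q _ => this q), Finset.sum_ite_eq]
      simp only [Finset.mem_univ, if_true]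
      apply hf
      rw [← hU]
      exact (Quotient.out_eq' _).symm
    rw [hfs]
    exact Submodule.sum_mem _ fun q _ =>
      Submodule.smul_mem _ _ (Submodule.subset_span ⟨q, rfl⟩)


/-- Vectors supported inside `{a,b,c}`. -/
def Ksub (t : Finset (Fin 9)) : Submodule (ZMod 2) V where
  carrier := {w | ∀ k ∉ t, w k = 0}
  zero_mem' := by intro k _; rfl
  add_mem' := by intro u v hu hv k hk; simp [hu k hk, hv k hk]
  smul_mem' := by intro c u hu k hk; simp [hu k hk]

lemma span_e_eq (a b c : Fin 9) (hab : a ≠ b) (hac : a ≠ c) (hbc : b ≠ c) :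
    Submodule.span (ZMod 2) {e a, e b, e c} = Ksub {a, b, c} := by
  apply le_antisymm
  · rw [Submodule.span_le]
    intro w hw
    simp only [Set.mem_insert_iff, Set.mem_singleton_iff] at hw
    rcases hw with rfl | rfl | rfl <;>
      · intro k hk
        simp only [Finset.mem_insert, Finset.mem_singleton, not_or] at hk
        simp only [e]
        first
        | exact Pi.single_eq_of_ne hk.1 1
        | exact Pi.single_eq_of_ne hk.2.1 1
        | exact Pi.single_eq_of_ne hk.2.2 1
  · intro w hw
    have hww : w = w a • e a + w b • e b + w c • e c := by
      funext k
      by_cases ha : k = a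
      · subst ha
        simp [e, Pi.single_eq_same, Pi.single_eq_of_ne hab, Pi.single_eq_of_ne hac]
      · by_cases hb : k = b
        · subst hb
          simp [e, Pi.single_eq_same, Pi.single_eq_of_ne ha, Pi.single_eq_of_ne hbc]
        · by_cases hc : k = c
          · subst hc
            simp [e, Pi.single_eq_same, Pi.single_eq_of_ne ha, Pi.single_eq_of_ne hb]
          · have h0 : w k = 0 := hw k (by simp [ha, hb, hc])
            simp [e, Pi.single_eq_of_ne ha, Pi.single_eq_of_ne hb, Pi.single_eq_of_ne hc, h0]
    rw [hww]
    refine Submodule.add_mem _ (Submodule.add_mem _ ?_ ?_) ?_ <;>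
      exact Submodule.smul_mem _ _ (Submodule.subset_span (by simp))

lemma quot_char (U : Submodule (ZMod 2) V) (a b c : Fin 9)
    (hab : a ≠ b) (hac : a ≠ c) (hbc : b ≠ c)
    (hU : U = Submodule.span (ZMod 2) {e a, e b, e c})
    (s : Finset (Fin 9)) (hs : ∀ k, k ∈ s ↔ (k ≠ a ∧ k ≠ b ∧ k ≠ c)) :
    ∀ x y : V, (Submodule.Quotient.mk x : V ⧸ U) = Submodule.Quotient.mk y ↔
      ∀ k ∈ s, x k = y k := by
  intro x y
  rw [Submodule.Quotient.eq, hU, span_e_eq a b c hab hac hbc]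
  constructor
  · intro h k hk
    have hk' : k ∉ ({a, b, c} : Finset (Fin 9)) := by
      rcases (hs k).1 hk with ⟨h1, h2, h3⟩
      simp [h1, h2, h3]
    have := h k hk'
    simpa [sub_eq_zero] using this
  · intro h k hk
    simp only [Finset.mem_insert, Finset.mem_singleton, not_or] at hk
    have : x k = y k := h k ((hs k).2 ⟨hk.1, hk.2.1, hk.2.2⟩)
    simp [Pi.sub_apply, this]

lemma iSup_fin3 (F : Fin 3 → Submodule (ZMod 2) (V → ZMod 2)) :
    (⨆ i : Fin 3, F i) = F 0 ⊔ F 1 ⊔ F 2 := by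
  apply le_antisymm
  · apply iSup_le
    intro i
    fin_cases i
    · exact le_sup_of_le_left le_sup_left
    · exact le_sup_of_le_left le_sup_right
    · exact le_sup_right
  · exact sup_le (sup_le (le_iSup F 0) (le_iSup F 1)) (le_iSup F 2)

def sX (i : Fin 3) : Finset (Fin 9) := Finset.univ.filter (fun k => ¬ (k.val / 3 = i.val))
def sZ (j : Fin 3) : Finset (Fin 9) := Finset.univ.filter (fun k => ¬ (k.val % 3 = j.val))

lemma spanX_i (i : Fin 3) :
    Submodule.span (ZMod 2) (Set.range fun q : V ⧸ Xfam i => HX ⟨i, q⟩) = Dep (sX i) := by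
  have hs : ∀ k : Fin 9, k ∈ sX i ↔
      (k ≠ ⟨3 * i.val, by have := i.isLt; omega⟩ ∧
       k ≠ ⟨3 * i.val + 1, by have := i.isLt; omega⟩ ∧
       k ≠ ⟨3 * i.val + 2, by have := i.isLt; omega⟩) := by
    revert i; decide
  exact span_coset_indicators (Xfam i) (sX i)
    (quot_char (Xfam i) _ _ _
      (by simp [Fin.ext_iff]) (by simp [Fin.ext_iff])
      (by simp [Fin.ext_iff]) rfl (sX i) hs)

lemma spanZ_j (j : Fin 3) :
    Submodule.span (ZMod 2) (Set.range fun q : V ⧸ Zfam j => HZ ⟨j, q⟩) = Dep (sZ j) := by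
  have hs : ∀ k : Fin 9, k ∈ sZ j ↔
      (k ≠ ⟨j.val, by have := j.isLt; omega⟩ ∧
       k ≠ ⟨j.val + 3, by have := j.isLt; omega⟩ ∧
       k ≠ ⟨j.val + 6, by have := j.isLt; omega⟩) := by
    revert j; decide
  exact span_coset_indicators (Zfam j) (sZ j)
    (quot_char (Zfam j) _ _ _
      (by simp [Fin.ext_iff]) (by simp [Fin.ext_iff])
      (by simp [Fin.ext_iff]) rfl (sZ j) hs)

lemma rankHX : Module.finrank (ZMod 2) ↥(Submodule.span (ZMod 2) (Set.range HX)) = 169 := by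
  have h : Submodule.span (ZMod 2) (Set.range HX)
      = Dep (sX 0) ⊔ Dep (sX 1) ⊔ Dep (sX 2) := by
    rw [show Set.range HX = Set.range (fun r : RX => HX r) from rfl]
    rw [Set.range_sigma_eq_iUnion_range, Submodule.span_iUnion]
    rw [show (fun i : Fin 3 => Submodule.span (ZMod 2) (Set.range fun q => HX ⟨i, q⟩))
        = fun i => Dep (sX i) from funext spanX_i]
    exact iSup_fin3 _
  rw [h]
  exact finrank_triple_sup _ _ _ (by decide) (by decide) (by decide)
    (by decide) (by decide) (by decide) (by decide)

lemma rankHZ : Module.finrank (ZMod 2) ↥(Submodule.span (ZMod 2) (Set.range HZ)) = 169 := by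
  have h : Submodule.span (ZMod 2) (Set.range HZ)
      = Dep (sZ 0) ⊔ Dep (sZ 1) ⊔ Dep (sZ 2) := by
    rw [show Set.range HZ = Set.range (fun r : RZ => HZ r) from rfl]
    rw [Set.range_sigma_eq_iUnion_range, Submodule.span_iUnion]
    rw [show (fun j : Fin 3 => Submodule.span (ZMod 2) (Set.range fun q => HZ ⟨j, q⟩))
        = fun j => Dep (sZ j) from funext spanZ_j]
    exact iSup_fin3 _
  rw [h]
  exact finrank_triple_sup _ _ _ (by decide) (by decide) (by decide)
    (by decide) (by decide) (by decide) (by decide)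

theorem stmt10 :
    Module.finrank (ZMod 2) ↥(Submodule.span (ZMod 2) (Set.range HX)) = 169 ∧
    Module.finrank (ZMod 2) ↥(Submodule.span (ZMod 2) (Set.range HZ)) = 169 ∧
    512 - Module.finrank (ZMod 2) ↥(Submodule.span (ZMod 2) (Set.range HX))
        - Module.finrank (ZMod 2) ↥(Submodule.span (ZMod 2) (Set.range HZ)) = 174 := by
  refine ⟨rankHX, rankHZ, ?_⟩
  rw [rankHX, rankHZ]
end

section
/- Let H_X, H_Z ∈ 𝔽₂^{m×n} be matrices such that for every row index r of H_X and every row index s of H_Z, the intersection of the supports N_X(r) = {v : H_X(r,v) = 1} and N_Z(s) = {v : H_Z(s,v) = 1} has cardinality 0 or 2. Let P be a positive natural number and let x : {(r,v) : H_X(r,v)=1} → ℤ/Pℤ and z : {(s,v) : H_Z(s,v)=1} → ℤ/Pℤ be shift-label functions satisfying: whenever N_X(r) ∩ N_Z(s) = {v₁, v₂} with v₁ ≠ v₂, one has x(r,v₁) − z(s,v₁) = x(r,v₂) − z(s,v₂) in ℤ/Pℤ. Define the lifted matrices H_X^{(P)}, H_Z^{(P)} ∈ 𝔽₂^{mP×nP}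 by replacing each 1-entry H_X(r,v) by the circulant permutation matrix I_P(x(r,v)), each 1-entry H_Z(s,v) by I_P(z(s,v)), and each 0-entry by the P × P zero matrix. Then H_X^{(P)} · (H_Z^{(P)})ᵀ = 0 over 𝔽₂. -/
open Matrix

/-- The `P × P` circulant permutation matrix over `𝔽₂` with shift `t ∈ ℤ/Pℤ`:
its `(i, j)`-entry is `1` if and only if `j = i + t`. -/
def cpm (P : ℕ) (t : ZMod P) : Matrix (ZMod P) (ZMod P) (ZMod 2) :=
  Matrix.of fun i j => if j = i + t then 1 else 0

/-- The support of row `r` of a matrix `H` over `𝔽₂`. -/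
def rowSupp {m n : ℕ} (H : Matrix (Fin m) (Fin n) (ZMod 2)) (r : Fin m) : Set (Fin n) :=
  {v : Fin n | H r v = 1}

/-- The `P`-lift of `H ∈ 𝔽₂^{m×n}`: each `1`-entry `H r v` is replaced by the circulant
permutation matrix of its shift label `lab r v _`, and each `0`-entry by the `P × P`
zero block. -/
def lift {m n : ℕ} (P : ℕ) (H : Matrix (Fin m) (Fin n) (ZMod 2))
    (lab : {p : Fin m × Fin n // H p.1 p.2 = 1} → ZMod P) :
    Matrix (Fin m × ZMod P) (Fin n × ZMod P) (ZMod 2) :=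
  Matrix.of fun ri vj =>
    if h : H ri.1 vj.1 = 1 then cpm P (lab ⟨(ri.1, vj.1), h⟩) ri.2 vj.2 else 0

theorem stmt14 (m n P : ℕ) [NeZero P]
    (HX HZ : Matrix (Fin m) (Fin n) (ZMod 2))
    (hint : ∀ (r s : Fin m),
      (rowSupp HX r ∩ rowSupp HZ s).ncard = 0 ∨ (rowSupp HX r ∩ rowSupp HZ s).ncard = 2)
    (x : {p : Fin m × Fin n // HX p.1 p.2 = 1} → ZMod P)
    (z : {p : Fin m × Fin n // HZ p.1 p.2 = 1} → ZMod P)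
    (hcong : ∀ (r s : Fin m) (v₁ v₂ : Fin n) (h₁ : HX r v₁ = 1) (h₁' : HZ s v₁ = 1)
      (h₂ : HX r v₂ = 1) (h₂' : HZ s v₂ = 1), v₁ ≠ v₂ →
      rowSupp HX r ∩ rowSupp HZ s = {v₁, v₂} →
      x ⟨(r, v₁), h₁⟩ - z ⟨(s, v₁), h₁'⟩ = x ⟨(r, v₂), h₂⟩ - z ⟨(s, v₂), h₂'⟩) :
    lift P HX x * (lift P HZ z)ᵀ = 0 := by
  ext ⟨r, i⟩ ⟨s, j⟩
  rw [Matrix.mul_apply, Fintype.sum_prod_type]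
  simp only [Matrix.transpose_apply, Matrix.zero_apply]
  have key : ∀ v : Fin n,
      (∑ k : ZMod P, lift P HX x (r, i) (v, k) * lift P HZ z (s, j) (v, k)) =
      if h : HX r v = 1 ∧ HZ s v = 1 then
        (if i + x ⟨(r, v), h.1⟩ = j + z ⟨(s, v), h.2⟩ then 1 else 0) else 0 := by
    intro v
    by_cases h1 : HX r v = 1
    · by_cases h2 : HZ s v = 1
      · simp only [lift, cpm, Matrix.of_apply, dif_pos h1, dif_pos h2,
          dif_pos (⟨h1, h2⟩ : HX r v = 1 ∧ HZ s v = 1)]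
        rw [Finset.sum_congr rfl (fun k _ => by rw [ite_mul, one_mul, zero_mul, ← ite_and])]
        by_cases hab : i + x ⟨(r, v), h1⟩ = j + z ⟨(s, v), h2⟩
        · rw [if_pos hab]
          have hrw : ∀ k : ZMod P,
              (if k = i + x ⟨(r, v), h1⟩ ∧ k = j + z ⟨(s, v), h2⟩ then (1 : ZMod 2) else 0)
                = if k = i + x ⟨(r, v), h1⟩ then 1 else 0 := fun k => by
            by_cases hk : k = i + x ⟨(r, v), h1⟩
            · simp [hk, hab]
            · simp [hk]
          simp only [hrw]
          simp
        · rw [if_neg hab]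
          apply Finset.sum_eq_zero
          intro k _
          rw [if_neg]
          rintro ⟨hk1, hk2⟩
          exact hab (hk1.symm.trans hk2)
      · simp [lift, h1, h2]
    · simp [lift, h1]
  simp only [key]
  rcases hint r s with h0 | h2
  · have hemp : rowSupp HX r ∩ rowSupp HZ s = ∅ :=
      (Set.ncard_eq_zero (Set.toFinite _)).mp h0
    apply Finset.sum_eq_zero
    intro v _
    rw [dif_neg]
    rintro ⟨ha, hb⟩
    have : v ∈ rowSupp HX r ∩ rowSupp HZ s := ⟨ha, hb⟩
    rw [hemp] at this
    exact this
  · obtain ⟨v₁, v₂, hne, hset⟩ := Set.ncard_eq_two.mp h2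
    have hm₁ : v₁ ∈ rowSupp HX r ∩ rowSupp HZ s := by rw [hset]; left; rfl
    have hm₂ : v₂ ∈ rowSupp HX r ∩ rowSupp HZ s := by rw [hset]; right; rfl
    have h₁ : HX r v₁ = 1 ∧ HZ s v₁ = 1 := ⟨hm₁.1, hm₁.2⟩
    have h₂ : HX r v₂ = 1 ∧ HZ s v₂ = 1 := ⟨hm₂.1, hm₂.2⟩
    rw [← Finset.sum_subset (Finset.subset_univ ({v₁, v₂} : Finset (Fin n)))]
    · rw [Finset.sum_pair hne, dif_pos h₁, dif_pos h₂]
      have hc := hcong r s v₁ v₂ h₁.1 h₁.2 h₂.1 h₂.2 hne hset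
      have hiff : (i + x ⟨(r, v₁), h₁.1⟩ = j + z ⟨(s, v₁), h₁.2⟩) ↔
          (i + x ⟨(r, v₂), h₂.1⟩ = j + z ⟨(s, v₂), h₂.2⟩) := by
        constructor <;> intro h
        · linear_combination h - hc
        · linear_combination h + hc
      by_cases hcond : i + x ⟨(r, v₁), h₁.1⟩ = j + z ⟨(s, v₁), h₁.2⟩
      · rw [if_pos hcond, if_pos (hiff.mp hcond)]; decide
      · rw [if_neg hcond, if_neg (fun h => hcond (hiff.mpr h))]; decide
    · intro v _ hv
      rw [dif_neg]
      rintro ⟨ha, hb⟩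
      have : v ∈ rowSupp HX r ∩ rowSupp HZ s := ⟨ha, hb⟩
      rw [hset] at this
      rcases this with h | h <;> simp_all
end
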